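/- For every q ∈ [1, ∞) there is a constant C > 0 (depending only on q) with the following property: for every integer σ ≥ 1, all nonnegative integers m < n, every 1-periodic f : ℝ → ℝ with |f|^q integrable on [0,1], and every bounded Lipschitz a : [m/σ, n/σ] → ℝ, one has | (∫_{m/σ}^{n/σ} |a(t) f(σt)|^q dt)^{1/q} − (∫_{m/σ}^{n/σ} |a(t)|^q dt)^{1/q} · (∫₀¹ |f(s)|^q ds)^{1/q} | ≤ C σ^{−1/q} ((n−m)/σ)^{1/q} ‖a‖_{C^{0,1}} (∫₀¹ |f(s)|^q ds)^{1/q}, where ‖a‖_{C^{0,1}} is the sum of the supremum of |a| and a Lipschitz constant of a. -/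

import Mathlib

open MeasureTheory
open scoped NNReal

/-- MVT bound: for `0 ≤ v ≤ u ≤ M` and `q ≥ 1`, `u^q - v^q ≤ q M^(q-1) (u-v)`. -/
lemma ihd_mvt {q : ℝ} (hq : 1 ≤ q) {M u v : ℝ} (hv : 0 ≤ v) (hvu : v ≤ u) (huM : u ≤ M) :
    u ^ q - v ^ q ≤ q * M ^ (q - 1) * (u - v) := by
  rcases eq_or_lt_of_le hvu with rfl | h
  · simp only [sub_self, mul_zero, le_refl]
  · have hcont : ContinuousOn (fun x : ℝ => x ^ q) (Set.Icc v u) := fun x _ =>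
      (Real.continuousAt_rpow_const x q (Or.inr (by linarith))).continuousWithinAt
    obtain ⟨c, hc, hc'⟩ := exists_hasDerivAt_eq_slope (fun x => x ^ q)
      (fun x => q * x ^ (q - 1)) h hcont
      (fun x _ => Real.hasDerivAt_rpow_const (Or.inr hq))
    have hc0 : 0 ≤ c := le_of_lt (lt_of_le_of_lt hv hc.1)
    have hcM : c ≤ M := le_trans hc.2.le huM
    have hne : u - v ≠ 0 := sub_ne_zero.2 h.ne'
    have heq : q * c ^ (q - 1) * (u - v) = u ^ q - v ^ q := by
      rw [hc']; field_simp
    rw [← heq]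
    have hle : c ^ (q - 1) ≤ M ^ (q - 1) := Real.rpow_le_rpow hc0 hcM (by linarith)
    have hq0 : (0:ℝ) < q := by linarith
    exact mul_le_mul_of_nonneg_right (mul_le_mul_of_nonneg_left hle hq0.le)
      (sub_nonneg.2 h.le)

lemma ihd_abs_rpow_sub {q : ℝ} (hq : 1 ≤ q) {M u v : ℝ} (hu : 0 ≤ u) (hv : 0 ≤ v)
    (huM : u ≤ M) (hvM : v ≤ M) : |u ^ q - v ^ q| ≤ q * M ^ (q - 1) * |u - v| := by
  rcases le_total v u with h | h
  · rw [abs_of_nonneg (sub_nonneg.2 (Real.rpow_le_rpow hv h (by linarith))),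
      abs_of_nonneg (sub_nonneg.2 h)]
    exact ihd_mvt hq hv h huM
  · rw [abs_sub_comm, abs_sub_comm u v,
      abs_of_nonneg (sub_nonneg.2 (Real.rpow_le_rpow hu h (by linarith))),
      abs_of_nonneg (sub_nonneg.2 h)]
    exact ihd_mvt hq hu h hvM

lemma ihd_rpow_add_le {x y p : ℝ} (hx : 0 ≤ x) (hy : 0 ≤ y) (hp : 0 ≤ p) (hp1 : p ≤ 1) :
    (x + y) ^ p ≤ x ^ p + y ^ p := by
  have h := NNReal.rpow_add_le_add_rpow x.toNNReal y.toNNReal hp hp1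
  have hc : ((x.toNNReal + y.toNNReal : ℝ≥0) : ℝ) = x + y := by
    simp [Real.coe_toNNReal, hx, hy]
  calc (x + y) ^ p = ((x.toNNReal + y.toNNReal : ℝ≥0) : ℝ) ^ p := by rw [hc]
    _ = ((x.toNNReal + y.toNNReal : ℝ≥0) ^ p : ℝ≥0) := by
        rw [NNReal.coe_rpow]
    _ ≤ ((x.toNNReal ^ p + y.toNNReal ^ p : ℝ≥0) : ℝ) := by exact_mod_cast h
    _ = x ^ p + y ^ p := by
        push_cast [NNReal.coe_rpow, Real.coe_toNNReal x hx, Real.coe_toNNReal y hy]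
        ring

lemma ihd_abs_rpow_le {x y p : ℝ} (hx : 0 ≤ x) (hy : 0 ≤ y) (hp : 0 ≤ p) (hp1 : p ≤ 1) :
    |x ^ p - y ^ p| ≤ |x - y| ^ p := by
  rcases le_total y x with h | h
  · rw [abs_of_nonneg (sub_nonneg.2 (Real.rpow_le_rpow hy h hp)),
      abs_of_nonneg (sub_nonneg.2 h)]
    have : x ^ p ≤ y ^ p + (x - y) ^ p := by
      calc x ^ p = (y + (x - y)) ^ p := by ring_nf
        _ ≤ y ^ p + (x - y) ^ p := ihd_rpow_add_le hy (sub_nonneg.2 h) hp hp1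
    linarith
  · rw [abs_sub_comm, abs_sub_comm x y,
      abs_of_nonneg (sub_nonneg.2 (Real.rpow_le_rpow hx h hp)),
      abs_of_nonneg (sub_nonneg.2 h)]
    have : y ^ p ≤ x ^ p + (y - x) ^ p := by
      calc y ^ p = (x + (y - x)) ^ p := by ring_nf
        _ ≤ x ^ p + (y - x) ^ p := ihd_rpow_add_le hx (sub_nonneg.2 h) hp hp1
    linarith

theorem improved_holder_decorrelation (q : ℝ) (hq : 1 ≤ q) :
    ∃ C : ℝ, 0 < C ∧
      ∀ (σ : ℕ), 1 ≤ σ → ∀ (m n : ℕ), m < n →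
      ∀ (f a : ℝ → ℝ),
        (∀ s, f (s + 1) = f s) →
        IntegrableOn (fun s => |f s| ^ q) (Set.Icc (0 : ℝ) 1) →
      ∀ M K : ℝ,
        (∀ t ∈ Set.Icc ((m : ℝ) / σ) ((n : ℝ) / σ), |a t| ≤ M) →
        (∀ t ∈ Set.Icc ((m : ℝ) / σ) ((n : ℝ) / σ),
          ∀ t' ∈ Set.Icc ((m : ℝ) / σ) ((n : ℝ) / σ), |a t - a t'| ≤ K * |t - t'|) →
        |(∫ t in ((m : ℝ) / σ)..((n : ℝ) / σ), |a t * f ((σ : ℝ) * t)| ^ q) ^ (1 / q)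
            - (∫ t in ((m : ℝ) / σ)..((n : ℝ) / σ), |a t| ^ q) ^ (1 / q)
              * (∫ s in (0 : ℝ)..1, |f s| ^ q) ^ (1 / q)|
          ≤ C * (σ : ℝ) ^ (-(1 / q)) * (((n : ℝ) - m) / σ) ^ (1 / q) * (M + K)
            * (∫ s in (0 : ℝ)..1, |f s| ^ q) ^ (1 / q) := by
  have hq0 : (0:ℝ) < q := by linarith
  refine ⟨2 * q, by linarith, ?_⟩
  intro σ hσ m n hmn f a hfper hfint M K hM hK
  have hσ0 : (0:ℝ) < σ := by exact_mod_cast Nat.lt_of_lt_of_le Nat.zero_lt_one hσ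
  have hσne : (σ:ℝ) ≠ 0 := ne_of_gt hσ0
  set p : ℝ := 1 / q with hp
  have hp0 : 0 < p := by positivity
  have hp1 : p ≤ 1 := by rw [hp]; rw [div_le_one hq0]; linarith
  set g : ℝ → ℝ := fun s => |f s| ^ q with hg
  have hg0 : ∀ s, 0 ≤ g s := fun s => Real.rpow_nonneg (abs_nonneg _) q
  have hgper : Function.Periodic g 1 := fun s => by simp only [hg, hfper s]
  set F := ∫ s in (0:ℝ)..1, g s with hF
  have hF0 : 0 ≤ F := intervalIntegral.integral_nonneg zero_le_one (fun s _ => hg0 s)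
  have hFp0 : 0 ≤ F ^ p := Real.rpow_nonneg hF0 p
  have hgint01 : IntervalIntegrable g volume 0 1 := by
    apply IntegrableOn.intervalIntegrable
    rwa [Set.uIcc_of_le zero_le_one]
  have hgshift : ∀ (j : ℕ) (x : ℝ), g (x + j) = g x := by
    intro j
    induction j with
    | zero => simp
    | succ j ih =>
      intro x
      calc g (x + (j + 1 : ℕ)) = g ((x + j) + 1) := by congr 1; push_cast; ring
        _ = g (x + j) := hgper _
        _ = g x := ih x
  have hgintj : ∀ j : ℕ, IntervalIntegrable g volume (j:ℝ) ((j:ℝ) + 1) := by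
    intro j
    have h2 := hgint01.comp_add_right (-(j:ℝ))
    have h3 : (fun x : ℝ => g (x + -(j:ℝ))) = g := funext fun x => by
      have := hgshift j (x + -(j:ℝ))
      simpa using this.symm
    rw [h3] at h2
    have e0 : (0:ℝ) - -(j:ℝ) = (j:ℝ) := by ring
    have e1 : (1:ℝ) - -(j:ℝ) = (j:ℝ) + 1 := by ring
    rwa [e0, e1] at h2
  -- the partition points
  set u : ℕ → ℝ := fun i => ((m:ℝ) + i) / σ with hu
  set N : ℕ := n - m with hN
  have hNcast : ((N:ℕ):ℝ) = (n:ℝ) - m := by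
    rw [hN, Nat.cast_sub hmn.le]
  have hu0 : u 0 = (m:ℝ)/σ := by simp [hu]
  have huN : u N = (n:ℝ)/σ := by
    simp only [hu, hNcast]; congr 1; ring
  have hustep : ∀ i : ℕ, u (i+1) = u i + 1/σ := by
    intro i; simp only [hu]; push_cast; ring
  have humono : ∀ i : ℕ, u i ≤ u (i+1) := by
    intro i; rw [hustep i]
    have : (0:ℝ) < 1/σ := by positivity
    linarith
  have hUMono : Monotone u := monotone_nat_of_le_succ humono
  have hmem : ∀ i, i ≤ N → u i ∈ Set.Icc ((m:ℝ)/σ) ((n:ℝ)/σ) :=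
    fun i hi => ⟨hu0 ▸ hUMono (Nat.zero_le i), huN ▸ hUMono hi⟩
  have hsub : ∀ i, i < N → Set.Icc (u i) (u (i+1)) ⊆ Set.Icc ((m:ℝ)/σ) ((n:ℝ)/σ) :=
    fun i hi => Set.Icc_subset_Icc (hmem i hi.le).1 (hmem (i+1) hi).2
  -- nonnegativity of M and K
  have hmncast : (m:ℝ) < (n:ℝ) := by exact_mod_cast hmn
  have hmn' : (m:ℝ)/σ < (n:ℝ)/σ := (div_lt_div_iff_of_pos_right hσ0).2 hmncast
  have hM0 : 0 ≤ M := le_trans (abs_nonneg _) (hM _ ⟨le_rfl, hmn'.le⟩)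
  have hK0 : 0 ≤ K := by
    have h1 := (abs_nonneg (a ((m:ℝ)/σ) - a ((n:ℝ)/σ))).trans
      (hK _ ⟨le_rfl, hmn'.le⟩ _ ⟨hmn'.le, le_rfl⟩)
    have h2 : 0 < |(m:ℝ)/σ - (n:ℝ)/σ| := abs_pos.2 (sub_ne_zero.2 hmn'.ne)
    nlinarith
  -- continuity of |a|^q on the big interval
  have hlip : LipschitzOnWith (Real.toNNReal K) a (Set.Icc ((m:ℝ)/σ) ((n:ℝ)/σ)) :=
    LipschitzOnWith.of_dist_le' fun x hx y hy => by
      rw [Real.dist_eq, Real.dist_eq]; exact hK x hx y hy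
  have hconta : ContinuousOn (fun t => |a t| ^ q) (Set.Icc ((m:ℝ)/σ) ((n:ℝ)/σ)) :=
    (hlip.continuousOn.abs).rpow_const fun x _ => Or.inr (by linarith)
  -- the fast oscillating factor integrates to F/σ on each subinterval
  have hfast : ∀ i : ℕ, ∫ t in u i..u (i+1), g ((σ:ℝ) * t) = F / σ := by
    intro i
    rw [intervalIntegral.integral_comp_mul_left g hσne]
    have e1 : (σ:ℝ) * u i = (m:ℝ) + i := by
      simp only [hu]; field_simp
    have e2 : (σ:ℝ) * u (i+1) = ((m:ℝ) + i) + 1 := by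
      simp only [hu]; push_cast; field_simp; ring
    rw [e1, e2]
    have h3 := hgper.intervalIntegral_add_eq ((m:ℝ)+i) 0
    simp only [zero_add] at h3
    rw [h3, ← hF, smul_eq_mul]
    ring
  have hfastint : ∀ i : ℕ,
      IntervalIntegrable (fun t => g ((σ:ℝ) * t)) volume (u i) (u (i+1)) := by
    intro i
    have h1 : IntervalIntegrable g volume ((m:ℝ)+i) (((m:ℝ)+i)+1) := by
      have := hgintj (m + i)
      push_cast at this
      exact this
    have h2 := h1.comp_mul_left (c := (σ:ℝ))
    have e1 : ((m:ℝ)+i)/σ = u i := by simp only [hu]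
    have e2 : (((m:ℝ)+i)+1)/σ = u (i+1) := by simp only [hu]; push_cast; ring
    rwa [e1, e2] at h2
  -- pointwise estimate
  set D : ℝ := q * M ^ (q-1) * K * (1/σ) with hD
  have hD0 : 0 ≤ D := by
    have : 0 ≤ M ^ (q-1) := Real.rpow_nonneg hM0 _
    positivity
  have hptwise : ∀ i, i < N → ∀ t ∈ Set.Icc (u i) (u (i+1)),
      |(|a t| ^ q - |a (u i)| ^ q)| ≤ D := by
    intro i hi t ht
    have htmem := hsub i hi ht
    have huimem := hsub i hi ⟨le_rfl, humono i⟩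
    have hMq : 0 ≤ q * M ^ (q-1) := by
      have : 0 ≤ M ^ (q-1) := Real.rpow_nonneg hM0 _
      positivity
    calc |(|a t| ^ q - |a (u i)| ^ q)|
        ≤ q * M ^ (q-1) * |(|a t| - |a (u i)|)| :=
          ihd_abs_rpow_sub hq (abs_nonneg _) (abs_nonneg _) (hM t htmem) (hM _ huimem)
      _ ≤ q * M ^ (q-1) * (K * (1/σ)) := by
          have h2 : |(|a t| - |a (u i)|)| ≤ |a t - a (u i)| := abs_abs_sub_abs_le_abs_sub _ _
          have h3 : |a t - a (u i)| ≤ K * |t - u i| := hK t htmem _ huimem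
          have h4 : |t - u i| ≤ 1/σ := by
            rw [abs_of_nonneg (sub_nonneg.2 ht.1)]
            have h5 := ht.2
            rw [hustep i] at h5
            linarith
          have h5 : K * |t - u i| ≤ K * (1/σ) := mul_le_mul_of_nonneg_left h4 hK0
          exact mul_le_mul_of_nonneg_left (h2.trans (h3.trans h5)) hMq
      _ = D := by rw [hD]; ring
  -- integrability of the product on each subinterval
  have hprodint : ∀ i, i < N →
      IntervalIntegrable (fun t => |a t| ^ q * g ((σ:ℝ) * t)) volume (u i) (u (i+1)) := by
    intro i hi
    rw [intervalIntegrable_iff_integrableOn_Ioc_of_le (humono i)]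
    have hae : AEStronglyMeasurable (fun t => |a t| ^ q)
        (volume.restrict (Set.Ioc (u i) (u (i+1)))) :=
      (hconta.mono ((Set.Ioc_subset_Icc_self).trans (hsub i hi))).aestronglyMeasurable
        measurableSet_Ioc
    have hbd : ∀ᵐ t ∂(volume.restrict (Set.Ioc (u i) (u (i+1)))), ‖|a t| ^ q‖ ≤ M ^ q :=
      (ae_restrict_mem measurableSet_Ioc).mono fun t ht => by
        rw [Real.norm_eq_abs, abs_of_nonneg (Real.rpow_nonneg (abs_nonneg _) q)]
        exact Real.rpow_le_rpow (abs_nonneg _)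
          (hM t (hsub i hi (Set.Ioc_subset_Icc_self ht))) hq0.le
    have hgInt : IntegrableOn (fun t => g ((σ:ℝ) * t)) (Set.Ioc (u i) (u (i+1))) volume := by
      rw [← intervalIntegrable_iff_integrableOn_Ioc_of_le (humono i)]
      exact hfastint i
    exact hgInt.bdd_mul hae hbd
  have haint : ∀ i, i < N →
      IntervalIntegrable (fun t => |a t| ^ q) volume (u i) (u (i+1)) := by
    intro i hi
    apply ContinuousOn.intervalIntegrable
    rw [Set.uIcc_of_le (humono i)]
    exact hconta.mono (hsub i hi)
  -- per-interval estimates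
  have hmain : ∀ i, i < N →
      |(∫ t in u i..u (i+1), |a t| ^ q * g ((σ:ℝ) * t)) - |a (u i)| ^ q * (F / σ)|
        ≤ D * (F / σ) := by
    intro i hi
    have hint2 : IntervalIntegrable (fun t => |a (u i)| ^ q * g ((σ:ℝ)*t)) volume
        (u i) (u (i+1)) := (hfastint i).const_mul _
    rw [show |a (u i)| ^ q * (F / σ)
        = ∫ t in u i..u (i+1), |a (u i)| ^ q * g ((σ:ℝ)*t) from by
      rw [intervalIntegral.integral_const_mul, hfast i]]
    rw [← intervalIntegral.integral_sub (hprodint i hi) hint2]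
    refine le_trans (intervalIntegral.abs_integral_le_integral_abs (humono i)) ?_
    have hstep : (∫ t in u i..u (i+1), |(|a t| ^ q * g ((σ:ℝ)*t)) - |a (u i)| ^ q * g ((σ:ℝ)*t)|)
        ≤ ∫ t in u i..u (i+1), D * g ((σ:ℝ)*t) := by
      apply intervalIntegral.integral_mono_on (humono i)
        (((hprodint i hi).sub hint2).abs) ((hfastint i).const_mul D)
      intro t ht
      have e : |a t| ^ q * g ((σ:ℝ)*t) - |a (u i)| ^ q * g ((σ:ℝ)*t)
          = (|a t| ^ q - |a (u i)| ^ q) * g ((σ:ℝ)*t) := by ring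
      rw [e, abs_mul, abs_of_nonneg (hg0 _)]
      exact mul_le_mul_of_nonneg_right (hptwise i hi t ht) (hg0 _)
    refine le_trans hstep (le_of_eq ?_)
    rw [intervalIntegral.integral_const_mul, hfast i]
  have hmain2 : ∀ i, i < N →
      |(∫ t in u i..u (i+1), |a t| ^ q) - |a (u i)| ^ q * (1/σ)| ≤ D * (1/σ) := by
    intro i hi
    rw [show |a (u i)| ^ q * (1/(σ:ℝ)) = ∫ t in u i..u (i+1), |a (u i)| ^ q from by
      rw [intervalIntegral.integral_const, hustep i, smul_eq_mul]; ring]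
    rw [← intervalIntegral.integral_sub (haint i hi) intervalIntegrable_const]
    refine le_trans (intervalIntegral.abs_integral_le_integral_abs (humono i)) ?_
    have hstep : (∫ t in u i..u (i+1), |(|a t| ^ q - |a (u i)| ^ q)|)
        ≤ ∫ t in u i..u (i+1), D := by
      apply intervalIntegral.integral_mono_on (humono i)
        (((haint i hi).sub intervalIntegrable_const).abs) intervalIntegrable_const
      intro t ht
      exact hptwise i hi t ht
    refine le_trans hstep (le_of_eq ?_)
    rw [intervalIntegral.integral_const, hustep i, smul_eq_mul]; ring
  -- summation
  set S : ℝ := ∑ i ∈ Finset.range N, |a (u i)| ^ q with hS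
  have hS0 : 0 ≤ S := Finset.sum_nonneg fun i _ => Real.rpow_nonneg (abs_nonneg _) q
  have hIsum : |(∫ t in (u 0)..(u N), |a t| ^ q * g ((σ:ℝ) * t)) - S * (F/σ)|
      ≤ (N:ℝ) * (D * (F/σ)) := by
    rw [← intervalIntegral.sum_integral_adjacent_intervals
      (fun i hi => hprodint i hi), hS, Finset.sum_mul, ← Finset.sum_sub_distrib]
    refine le_trans (Finset.abs_sum_le_sum_abs _ _) ?_
    refine le_trans (Finset.sum_le_sum fun i hi => hmain i (Finset.mem_range.1 hi)) ?_
    rw [Finset.sum_const, Finset.card_range, nsmul_eq_mul]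
  have hAsum : |(∫ t in (u 0)..(u N), |a t| ^ q) - S * (1/σ)| ≤ (N:ℝ) * (D * (1/σ)) := by
    rw [← intervalIntegral.sum_integral_adjacent_intervals
      (fun i hi => haint i hi), hS, Finset.sum_mul, ← Finset.sum_sub_distrib]
    refine le_trans (Finset.abs_sum_le_sum_abs _ _) ?_
    refine le_trans (Finset.sum_le_sum fun i hi => hmain2 i (Finset.mem_range.1 hi)) ?_
    rw [Finset.sum_const, Finset.card_range, nsmul_eq_mul]
  -- rewrite the goal's integrals
  have hIeq : (∫ t in ((m:ℝ)/σ)..((n:ℝ)/σ), |a t * f ((σ:ℝ)*t)| ^ q)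
      = ∫ t in (u 0)..(u N), |a t| ^ q * g ((σ:ℝ)*t) := by
    rw [hu0, huN]
    refine intervalIntegral.integral_congr fun t _ => ?_
    simp only [hg]
    rw [abs_mul, Real.mul_rpow (abs_nonneg _) (abs_nonneg _)]
  have hAeq : (∫ t in ((m:ℝ)/σ)..((n:ℝ)/σ), |a t| ^ q)
      = ∫ t in (u 0)..(u N), |a t| ^ q := by rw [hu0, huN]
  rw [hIeq, hAeq]
  have hI0 : 0 ≤ ∫ t in (u 0)..(u N), |a t| ^ q * g ((σ:ℝ)*t) :=
    intervalIntegral.integral_nonneg (hUMono (Nat.zero_le N))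
      (fun t _ => mul_nonneg (Real.rpow_nonneg (abs_nonneg _) _) (hg0 _))
  have hA0 : 0 ≤ ∫ t in (u 0)..(u N), |a t| ^ q :=
    intervalIntegral.integral_nonneg (hUMono (Nat.zero_le N))
      (fun t _ => Real.rpow_nonneg (abs_nonneg _) _)
  have hB0 : 0 ≤ (N:ℝ) * (D * (1/σ)) := by positivity
  have hSσ0 : 0 ≤ S * (1/(σ:ℝ)) := by positivity
  -- distance from I^p to (S F/σ)^p
  have h1 : |(∫ t in (u 0)..(u N), |a t| ^ q * g ((σ:ℝ)*t)) ^ p - (S * (F/σ)) ^ p|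
      ≤ ((N:ℝ) * (D * (1/σ))) ^ p * F ^ p := by
    have ha := ihd_abs_rpow_le hI0 (by positivity : 0 ≤ S * (F/(σ:ℝ))) hp0.le hp1
    have hb := Real.rpow_le_rpow (abs_nonneg _) hIsum hp0.le
    have hc : ((N:ℝ) * (D * (F/σ))) ^ p = ((N:ℝ) * (D * (1/σ))) ^ p * F ^ p := by
      rw [show (N:ℝ) * (D * (F/σ)) = ((N:ℝ) * (D * (1/σ))) * F from by ring,
        Real.mul_rpow hB0 hF0]
    exact ha.trans (hb.trans_eq hc)
  have hfac2 : (S * (F/(σ:ℝ))) ^ p = (S * (1/(σ:ℝ))) ^ p * F ^ p := by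
    rw [show S * (F/(σ:ℝ)) = (S * (1/(σ:ℝ))) * F from by ring, Real.mul_rpow hSσ0 hF0]
  -- distance from A^p to (S/σ)^p
  have h3 : |(∫ t in (u 0)..(u N), |a t| ^ q) ^ p - (S * (1/(σ:ℝ))) ^ p|
      ≤ ((N:ℝ) * (D * (1/σ))) ^ p :=
    (ihd_abs_rpow_le hA0 hSσ0 hp0.le hp1).trans
      (Real.rpow_le_rpow (abs_nonneg _) hAsum hp0.le)
  -- key constant estimate
  have hMq10 : 0 ≤ M ^ (q-1) := Real.rpow_nonneg hM0 _
  have hqp : q ^ p ≤ q := by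
    calc q ^ p ≤ q ^ (1:ℝ) := Real.rpow_le_rpow_of_exponent_le hq hp1
      _ = q := Real.rpow_one q
  have hMK : (M ^ (q-1)) ^ p * K ^ p ≤ M + K := by
    have hsum : (q-1)*p + p = 1 := by rw [hp]; field_simp; ring
    calc (M ^ (q-1)) ^ p * K ^ p = M ^ ((q-1)*p) * K ^ p := by rw [← Real.rpow_mul hM0]
      _ ≤ (M+K) ^ ((q-1)*p) * (M+K) ^ p := by
          apply mul_le_mul
            (Real.rpow_le_rpow hM0 (by linarith) (mul_nonneg (by linarith) hp0.le))
            (Real.rpow_le_rpow hK0 (by linarith) hp0.le)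
            (Real.rpow_nonneg hK0 _) (Real.rpow_nonneg (by linarith) _)
      _ = (M+K) ^ ((q-1)*p + p) :=
          (Real.rpow_add' (by linarith) (by rw [hsum]; exact one_ne_zero)).symm
      _ = M + K := by rw [hsum, Real.rpow_one]
  have hσp : ((σ:ℝ)⁻¹) ^ p = (σ:ℝ) ^ (-p) := by
    rw [Real.inv_rpow hσ0.le, Real.rpow_neg hσ0.le]
  have hnm0 : (0:ℝ) ≤ ((n:ℝ) - m)/σ := div_nonneg (by linarith) hσ0.le
  have hBle : ((N:ℝ) * (D * (1/σ))) ^ p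
      ≤ q * (σ:ℝ) ^ (-p) * (((n:ℝ) - m)/σ) ^ p * (M + K) := by
    have e0 : (N:ℝ) * (D * (1/σ)) = ((N:ℝ)/σ) * (q * (M ^ (q-1) * (K * (σ:ℝ)⁻¹))) := by
      rw [hD]; ring
    have hx1 : 0 ≤ (N:ℝ)/σ := by positivity
    have hx4 : 0 ≤ K * (σ:ℝ)⁻¹ := mul_nonneg hK0 (by positivity)
    rw [e0, Real.mul_rpow hx1 (mul_nonneg hq0.le (mul_nonneg hMq10 hx4)),
      Real.mul_rpow hq0.le (mul_nonneg hMq10 hx4), Real.mul_rpow hMq10 hx4,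
      Real.mul_rpow hK0 (by positivity), hσp, hNcast]
    have hσp0 : 0 ≤ (σ:ℝ) ^ (-p) := Real.rpow_nonneg hσ0.le _
    have hfin : q ^ p * ((M ^ (q-1)) ^ p * (K ^ p * (σ:ℝ) ^ (-p)))
        ≤ q * ((M+K) * (σ:ℝ) ^ (-p)) := by
      have h5 : q ^ p * ((M ^ (q-1)) ^ p * K ^ p) ≤ q * (M+K) :=
        mul_le_mul hqp hMK
          (mul_nonneg (Real.rpow_nonneg hMq10 _) (Real.rpow_nonneg hK0 _)) (by linarith)
      calc q ^ p * ((M ^ (q-1)) ^ p * (K ^ p * (σ:ℝ) ^ (-p)))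
          = (q ^ p * ((M ^ (q-1)) ^ p * K ^ p)) * (σ:ℝ) ^ (-p) := by ring
        _ ≤ (q * (M+K)) * (σ:ℝ) ^ (-p) := mul_le_mul_of_nonneg_right h5 hσp0
        _ = q * ((M+K) * (σ:ℝ) ^ (-p)) := by ring
    calc (((n:ℝ) - m)/σ) ^ p * (q ^ p * ((M ^ (q-1)) ^ p * (K ^ p * (σ:ℝ) ^ (-p))))
        ≤ (((n:ℝ) - m)/σ) ^ p * (q * ((M+K) * (σ:ℝ) ^ (-p))) :=
          mul_le_mul_of_nonneg_left hfin (Real.rpow_nonneg hnm0 _)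
      _ = q * (σ:ℝ) ^ (-p) * (((n:ℝ) - m)/σ) ^ p * (M + K) := by ring
  -- final triangle inequality
  calc |(∫ t in (u 0)..(u N), |a t| ^ q * g ((σ:ℝ)*t)) ^ p
        - (∫ t in (u 0)..(u N), |a t| ^ q) ^ p * F ^ p|
      ≤ |(∫ t in (u 0)..(u N), |a t| ^ q * g ((σ:ℝ)*t)) ^ p - (S * (1/(σ:ℝ))) ^ p * F ^ p|
        + |(S * (1/(σ:ℝ))) ^ p * F ^ p - (∫ t in (u 0)..(u N), |a t| ^ q) ^ p * F ^ p| :=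
        abs_sub_le _ _ _
    _ ≤ ((N:ℝ) * (D * (1/σ))) ^ p * F ^ p + ((N:ℝ) * (D * (1/σ))) ^ p * F ^ p := by
        apply add_le_add
        · rw [← hfac2]; exact h1
        · rw [← sub_mul, abs_mul, abs_of_nonneg hFp0]
          exact mul_le_mul_of_nonneg_right (by rw [abs_sub_comm]; exact h3) hFp0
    _ = 2 * (((N:ℝ) * (D * (1/σ))) ^ p * F ^ p) := by ring
    _ ≤ 2 * ((q * (σ:ℝ) ^ (-p) * (((n:ℝ) - m)/σ) ^ p * (M + K)) * F ^ p) := by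
        have := mul_le_mul_of_nonneg_right hBle hFp0
        linarith
    _ = 2 * q * (σ:ℝ) ^ (-p) * (((n:ℝ) - m)/σ) ^ p * (M + K) * F ^ p := by ring
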